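/- Let (D,≤) be an algebraic L-domain and {x_1,…,x_n} a nonempty finite subset of K*(D). Then the conjunction ↑x_1 ∧ ↑x_2 ∧ … ∧ ↑x_n in the associated calculus (L(P_D),⊢_D) is an irreducible conjunction if and only if sup{x_1,…,x_n} exists in D. -/

import Mathlib

/- ## Syntax of disjunctive propositional logic -/

/-- Raw formulae over a set `P` of atomic formulae: atoms, the constants
`T` and `F`, binary conjunction, and disjunction of an arbitrary family
of formulae. -/
inductive Fm (P : Type) : Type 1 where
  | atom : P → Fm P
  | tt : Fm P
  | ff : Fm P
  | conj : Fm P → Fm P → Fm P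
  | disj : {ι : Type} → (ι → Fm P) → Fm P

namespace Fm

/-- The valid sequents of the disjunctive sequent calculus generated from the
disjunctive basis `(P, A)`, where `A` is the set of atomic disjointness
assumptions `p₁,…,pₙ ⊢ F` (each given by a finite nonempty set of atoms). -/
inductive Seq {P : Type} (A : Set (Set P)) : Set (Fm P) → Fm P → Prop where
  | ax {s : Set P} : s ∈ A → s.Finite → s.Nonempty → Seq A (Fm.atom '' s) Fm.ff
  | id (φ : Fm P) : Seq A {φ} φ
  | lwk {Γ : Set (Fm P)} {ψ : Fm P} (φ : Fm P) : Seq A Γ ψ → Seq A (insert φ Γ) ψ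
  | cut {Γ Δ : Set (Fm P)} {φ ψ : Fm P} :
      Seq A Γ φ → Seq A (insert φ Δ) ψ → Seq A (Γ ∪ Δ) ψ
  | lf (φ : Fm P) : Seq A {Fm.ff} φ
  | rt : Seq A ∅ Fm.tt
  | landl {Γ : Set (Fm P)} {φ ψ θ : Fm P} :
      Seq A (insert φ (insert ψ Γ)) θ → Seq A (insert (Fm.conj φ ψ) Γ) θ
  | randr {Γ Δ : Set (Fm P)} {φ ψ : Fm P} :
      Seq A Γ φ → Seq A Δ ψ → Seq A (Γ ∪ Δ) (Fm.conj φ ψ)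
  | ldisj {Γ : Set (Fm P)} {θ : Fm P} {ι : Type} {f : ι → Fm P} :
      (∀ i, Seq A (insert (f i) Γ) θ) → (∀ i j, i ≠ j → Seq A {f i, f j} Fm.ff) →
      Seq A (insert (Fm.disj f) Γ) θ
  | rdisj {Γ : Set (Fm P)} {ι : Type} {f : ι → Fm P} (i₀ : ι) :
      Seq A Γ (f i₀) → (∀ i j, i ≠ j → Seq A {f i, f j} Fm.ff) →
      Seq A Γ (Fm.disj f)

/-- The wellformed formulae `L(P)` generated from the disjunctive basis
`(P, A)`: disjunctions are only formed over provably pairwise disjoint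
families. -/
inductive WF {P : Type} (A : Set (Set P)) : Fm P → Prop where
  | atom (p : P) : WF A (Fm.atom p)
  | tt : WF A Fm.tt
  | ff : WF A Fm.ff
  | conj {φ ψ : Fm P} : WF A φ → WF A ψ → WF A (Fm.conj φ ψ)
  | disj {ι : Type} {f : ι → Fm P} : (∀ i, WF A (f i)) →
      (∀ i j, i ≠ j → Seq A {f i, f j} Fm.ff) → WF A (Fm.disj f)

end Fm

/- ## Generic notions relative to a wellformedness predicate `W` (the set
`L(P)` of formulae) and an entailment relation `E` (the valid sequents). -/

section Defs

variable {P Q R : Type}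

/-- `φ` is a tautology: `T ⊢ φ` is valid. -/
def Taut (W : Fm P → Prop) (E : Set (Fm P) → Fm P → Prop) (φ : Fm P) : Prop :=
  W φ ∧ E {Fm.tt} φ

/-- `φ` is a contradiction: `φ ⊢ F` is valid. -/
def Contra (W : Fm P → Prop) (E : Set (Fm P) → Fm P → Prop) (φ : Fm P) : Prop :=
  W φ ∧ E {φ} Fm.ff

/-- `φ` is satisfiable: neither a tautology nor a contradiction. -/
def Satisfiable (W : Fm P → Prop) (E : Set (Fm P) → Fm P → Prop) (φ : Fm P) : Prop :=
  W φ ∧ ¬ Taut W E φ ∧ ¬ Contra W E φ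

/-- Built up from atomic formulae only by conjunctive connectives. -/
inductive ConjShape {P : Type} : Fm P → Prop where
  | atom (p : P) : ConjShape (Fm.atom p)
  | conj {φ ψ : Fm P} : ConjShape φ → ConjShape ψ → ConjShape (Fm.conj φ ψ)

/-- A conjunction: a satisfiable formula built up from atomic formulae only
by conjunctive connectives. -/
def IsConjForm (W : Fm P → Prop) (E : Set (Fm P) → Fm P → Prop) (φ : Fm P) : Prop :=
  ConjShape φ ∧ Satisfiable W E φ

/-- `X[⊢] = {φ ∈ L(P) : Γ ⊢ φ is valid for some finite Γ ⊆ X}`. -/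
def entClose (W : Fm P → Prop) (E : Set (Fm P) → Fm P → Prop) (X : Set (Fm P)) :
    Set (Fm P) :=
  {φ | W φ ∧ ∃ Γ : Set (Fm P), Γ ⊆ X ∧ Γ.Finite ∧ E Γ φ}

/-- A logical state: a nonempty proper subset `S` of `L(P)` such that
(S1) any flat formula `⋁̇ᵢ μᵢ` in `S` has some disjunct `μᵢ₀ ∈ S`, and
(S2) `S[⊢] ⊆ S`. -/
structure IsLogicalState (W : Fm P → Prop) (E : Set (Fm P) → Fm P → Prop)
    (S : Set (Fm P)) : Prop where
  nonempty : S.Nonempty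
  subset : S ⊆ {φ | W φ}
  proper : S ≠ {φ | W φ}
  s1 : ∀ (ι : Type) (f : ι → Fm P), (∀ i, IsConjForm W E (f i)) →
      (∀ i j, i ≠ j → E {f i, f j} Fm.ff) → Satisfiable W E (Fm.disj f) →
      Fm.disj f ∈ S → ∃ i, f i ∈ S
  s2 : entClose W E S ⊆ S

/-- `[X]_S`: the intersection of all logical states `T` with `X ⊆ T ⊆ S`. -/
def clIn (W : Fm P → Prop) (E : Set (Fm P) → Fm P → Prop) (X S : Set (Fm P)) :
    Set (Fm P) :=
  ⋂₀ {T | IsLogicalState W E T ∧ X ⊆ T ∧ T ⊆ S}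

/-- An irreducible conjunction. -/
def IsIrredConj (W : Fm P → Prop) (E : Set (Fm P) → Fm P → Prop) (μ : Fm P) : Prop :=
  IsConjForm W E μ ∧ ∀ (ι : Type) (f : ι → Fm P), (∀ i, W (f i)) →
    (∀ i j, i ≠ j → E {f i, f j} Fm.ff) → E {μ} (Fm.disj f) → ∃ i, E {μ} (f i)

/-- An expressive disjunctive sequent calculus: every satisfiable formula is
logically equivalent to an irreducible flat formula (from below disjunctwise). -/
def Expressive (W : Fm P → Prop) (E : Set (Fm P) → Fm P → Prop) : Prop :=
  ∀ ψ : Fm P, Satisfiable W E ψ → ∃ (ι : Type) (f : ι → Fm P),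
    (∀ i, IsIrredConj W E (f i)) ∧ (∀ i j, i ≠ j → E {f i, f j} Fm.ff) ∧
    Satisfiable W E (Fm.disj f) ∧ E {ψ} (Fm.disj f) ∧ ∀ i, E {f i} ψ

/-- `Θ[X] = {φ ∈ L(Q) : (μ,φ) ∈ Θ for some μ ∈ X ∩ IC(P)}`. -/
def ThetaImage (WP : Fm P → Prop) (EP : Set (Fm P) → Fm P → Prop)
    (Θ : Fm P → Fm Q → Prop) (X : Set (Fm P)) : Set (Fm Q) :=
  {φ | ∃ μ ∈ X, IsIrredConj WP EP μ ∧ Θ μ φ}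

/-- A consequence relation `Θ ⊆ IC(P) × L(Q)` satisfying (R1), (R2), (R3). -/
def IsConsRel (WP : Fm P → Prop) (EP : Set (Fm P) → Fm P → Prop)
    (WQ : Fm Q → Prop) (EQ : Set (Fm Q) → Fm Q → Prop)
    (Θ : Fm P → Fm Q → Prop) : Prop :=
  (∀ μ ψ, Θ μ ψ → IsIrredConj WP EP μ ∧ WQ ψ) ∧
  (∀ μ ν ψ, IsIrredConj WP EP μ → EP {μ} ν → Θ ν ψ → Θ μ ψ) ∧
  (∀ μ φ ψ, WQ ψ → Θ μ φ → EQ {φ} ψ → Θ μ ψ) ∧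
  (∀ μ ψ, Θ μ ψ → ∃ ν, IsIrredConj WQ EQ ν ∧ Θ μ ν ∧ EQ {ν} ψ)

/-- Composition of consequence relations. -/
def consRelComp (WQ : Fm Q → Prop) (EQ : Set (Fm Q) → Fm Q → Prop)
    (Θ : Fm P → Fm Q → Prop) (Θ' : Fm Q → Fm R → Prop) : Fm P → Fm R → Prop :=
  fun μ φ => ∃ ν, IsIrredConj WQ EQ ν ∧ Θ μ ν ∧ Θ' ν φ

/-- The identity consequence relation `(μ,φ) ∈ id_P ↔ φ ∈ {μ}[⊢_P]`. -/
def consRelId (W : Fm P → Prop) (E : Set (Fm P) → Fm P → Prop) : Fm P → Fm P → Prop :=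
  fun μ φ => IsIrredConj W E μ ∧ φ ∈ entClose W E {μ}

end Defs

/-- The poset of logical states of the calculus generated by the basis `(P,A)`,
ordered by set inclusion. -/
abbrev LSt (P : Type) (A : Set (Set P)) : Type 1 :=
  {S : Set (Fm P) // IsLogicalState (Fm.WF A) (Fm.Seq A) S}

/- ## Domain-theoretic notions -/

/-- A compact element of a poset (w.r.t. suprema of directed subsets). -/
def IsCompactElt {α : Type*} [PartialOrder α] (x : α) : Prop :=
  ∀ d : Set α, d.Nonempty → DirectedOn (· ≤ ·) d → ∀ s, IsLUB d s → x ≤ s →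
    ∃ y ∈ d, x ≤ y

/-- An algebraic domain: a pointed dcpo in which every element is the
supremum of the directed set of compact elements below it. -/
def IsAlgebraicDomain (α : Type*) [PartialOrder α] : Prop :=
  (∃ b : α, ∀ x, b ≤ x) ∧
  (∀ d : Set α, d.Nonempty → DirectedOn (· ≤ ·) d → ∃ s, IsLUB d s) ∧
  (∀ x : α, ({k : α | IsCompactElt k ∧ k ≤ x}).Nonempty ∧
    DirectedOn (· ≤ ·) {k : α | IsCompactElt k ∧ k ≤ x} ∧
    IsLUB {k : α | IsCompactElt k ∧ k ≤ x} x)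

/-- An algebraic L-domain: an algebraic domain in which every principal ideal
`↓x` is a complete lattice (every subset of `↓x` has a supremum in `↓x`). -/
def IsAlgebraicLDomain (α : Type*) [PartialOrder α] : Prop :=
  IsAlgebraicDomain α ∧
  ∀ x : α, ∀ T : Set α, T ⊆ Set.Iic x → ∃ s ∈ Set.Iic x,
    (∀ t ∈ T, t ≤ s) ∧ ∀ u ∈ Set.Iic x, (∀ t ∈ T, t ≤ u) → s ≤ u

/- ## The calculus associated with an algebraic L-domain -/

/-- The atomic formulae of the associated calculus: (upsets of) elements of
`K*(D)`, the compact non-bottom elements. -/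
abbrev LAtom (D : Type) [PartialOrder D] : Type := {x : D // IsCompactElt x ∧ ¬ IsBot x}

/-- The interpretation `φ̂ ⊆ D` of a formula: `F, T, ∧, ⋁̇` become
`∅, D`, intersection and union. -/
def hat {D : Type} [PartialOrder D] : Fm (LAtom D) → Set D
  | Fm.atom x => Set.Ici x.val
  | Fm.tt => Set.univ
  | Fm.ff => ∅
  | Fm.conj φ ψ => hat φ ∩ hat ψ
  | Fm.disj f => ⋃ i, hat (f i)

/-- The formulae `L(P_D)` of the associated calculus: disjunctions only of
families with pairwise disjoint interpretations. -/
inductive DWF {D : Type} [PartialOrder D] : Fm (LAtom D) → Prop where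
  | atom (p : LAtom D) : DWF (Fm.atom p)
  | tt : DWF Fm.tt
  | ff : DWF Fm.ff
  | conj {φ ψ : Fm (LAtom D)} : DWF φ → DWF ψ → DWF (Fm.conj φ ψ)
  | disj {ι : Type} {f : ι → Fm (LAtom D)} : (∀ i, DWF (f i)) →
      (∀ i j, i ≠ j → hat (f i) ∩ hat (f j) = ∅) → DWF (Fm.disj f)

/-- Validity in the associated calculus: `ψ₁,…,ψₙ ⊢_D φ` iff
`ψ̂₁ ∩ … ∩ ψ̂ₙ ⊆ φ̂`. -/
def DSeq {D : Type} [PartialOrder D] (Γ : Set (Fm (LAtom D))) (φ : Fm (LAtom D)) : Prop :=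
  ⋂₀ (hat '' Γ) ⊆ hat φ

/-- A decomposable subset of `D`: the upper set `↑A` of a pairwise
inconsistent set `A` of compact elements. -/
def IsDecomposable {D : Type} [PartialOrder D] (U : Set D) : Prop :=
  ∃ A : Set D, (∀ a ∈ A, IsCompactElt a) ∧
    (∀ a ∈ A, ∀ b ∈ A, a ≠ b → Set.Ici a ∩ Set.Ici b = ∅) ∧
    U = ⋃ a ∈ A, Set.Ici a

/-- The conjunction `↑x₁ ∧ ↑x₂ ∧ … ∧ ↑xₙ` of a nonempty list of atoms. -/
def bigConj {P : Type} (x : P) (l : List P) : Fm P :=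
  l.foldl (fun φ y => Fm.conj φ (Fm.atom y)) (Fm.atom x)

section Aux

variable {D : Type} [PartialOrder D]

/-- The interpretation of any formula is an upper set. -/
lemma hat_upper (φ : Fm (LAtom D)) :
    ∀ a b : D, a ∈ hat φ → a ≤ b → b ∈ hat φ := by
  induction φ with
  | atom p => intro a b ha hab; exact le_trans ha hab
  | tt => intro a b _ _; trivial
  | ff => intro a b ha _; exact ha.elim
  | conj φ ψ ihφ ihψ =>
      intro a b ha hab; exact ⟨ihφ a b ha.1 hab, ihψ a b ha.2 hab⟩
  | disj f ih =>
      intro a b ha hab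
      obtain ⟨s, ⟨i, rfl⟩, has⟩ := ha
      exact ⟨_, ⟨i, rfl⟩, ih i a b has hab⟩

lemma hat_foldl (l : List (LAtom D)) (φ : Fm (LAtom D)) :
    hat (l.foldl (fun ψ y => Fm.conj ψ (Fm.atom y)) φ)
      = hat φ ∩ {d | ∀ y ∈ l, (y : LAtom D).val ≤ d} := by
  induction l generalizing φ with
  | nil => simp
  | cons y l ih =>
      rw [List.foldl_cons, ih]
      ext d
      simp only [hat, Set.mem_inter_iff, Set.mem_setOf_eq, Set.mem_Ici,
        List.mem_cons]
      constructor
      · rintro ⟨⟨h1, h2⟩, h3⟩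
        exact ⟨h1, fun z hz => hz.elim (fun e => e ▸ h2) (h3 z)⟩
      · rintro ⟨h1, h2⟩
        exact ⟨⟨h1, h2 y (Or.inl rfl)⟩, fun z hz => h2 z (Or.inr hz)⟩

lemma hat_bigConj (x : LAtom D) (l : List (LAtom D)) :
    hat (bigConj x l) = {d | ∀ y ∈ x :: l, (y : LAtom D).val ≤ d} := by
  rw [bigConj, hat_foldl]
  ext d
  simp only [hat, Set.mem_inter_iff, Set.mem_Ici, Set.mem_setOf_eq,
    List.mem_cons]
  constructor
  · rintro ⟨h1, h2⟩
    exact fun z hz => hz.elim (fun e => e ▸ h1) (h2 z)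
  · intro h
    exact ⟨h x (Or.inl rfl), fun z hz => h z (Or.inr hz)⟩

lemma conjShape_foldl (l : List (LAtom D)) (φ : Fm (LAtom D))
    (hφ : ConjShape φ) :
    ConjShape (l.foldl (fun ψ y => Fm.conj ψ (Fm.atom y)) φ) := by
  induction l generalizing φ with
  | nil => exact hφ
  | cons y l ih => exact ih _ (ConjShape.conj hφ (ConjShape.atom y))

lemma dwf_foldl (l : List (LAtom D)) (φ : Fm (LAtom D)) (hφ : DWF φ) :
    DWF (l.foldl (fun ψ y => Fm.conj ψ (Fm.atom y)) φ) := by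
  induction l generalizing φ with
  | nil => exact hφ
  | cons y l ih => exact ih _ (DWF.conj hφ (DWF.atom y))

lemma dseq_singleton (μ φ : Fm (LAtom D)) :
    DSeq {μ} φ ↔ hat μ ⊆ hat φ := by
  unfold DSeq
  rw [Set.image_singleton, Set.sInter_singleton]

lemma dseq_pair (φ ψ : Fm (LAtom D)) :
    DSeq {φ, ψ} Fm.ff ↔ hat φ ∩ hat ψ ⊆ (∅ : Set D) := by
  unfold DSeq
  rw [Set.image_pair, Set.sInter_pair]
  rfl

/-- A directed set contains an upper bound for any finite list of elements
each bounded by some member. -/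
lemma directed_list_bound (d : Set D) (hne : d.Nonempty)
    (hdir : DirectedOn (· ≤ ·) d) :
    ∀ l : List D, (∀ a ∈ l, ∃ b ∈ d, a ≤ b) → ∃ b ∈ d, ∀ a ∈ l, a ≤ b := by
  intro l
  induction l with
  | nil => intro _; obtain ⟨b, hb⟩ := hne; exact ⟨b, hb, by simp⟩
  | cons a l ih =>
      intro h
      obtain ⟨b, hb, hab⟩ := h a List.mem_cons_self
      obtain ⟨c, hc, hlc⟩ := ih (fun z hz => h z (List.mem_cons_of_mem a hz))
      obtain ⟨e, he, hbe, hce⟩ := hdir b hb c hc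
      refine ⟨e, he, fun z hz => ?_⟩
      rcases List.mem_cons.mp hz with rfl | hz
      · exact le_trans hab hbe
      · exact le_trans (hlc z hz) hce

end Aux

/-- In the calculus associated with an algebraic L-domain `D`,
the conjunction `↑x₁ ∧ … ∧ ↑xₙ` (over a nonempty finite subset of `K*(D)`)
is an irreducible conjunction iff `sup{x₁,…,xₙ}` exists in `D`. -/
theorem stmt14 (D : Type) [PartialOrder D] (hD : IsAlgebraicLDomain D)
    (x : LAtom D) (l : List (LAtom D)) :
    IsIrredConj DWF DSeq (bigConj x l) ↔
      ∃ s : D, IsLUB {d : D | ∃ y ∈ x :: l, (y : LAtom D).val = d} s := by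
  set Y : Set D := {d : D | ∃ y ∈ x :: l, (y : LAtom D).val = d} with hY
  set μ : Fm (LAtom D) := bigConj x l with hμ
  have hhat : hat μ = upperBounds Y := by
    rw [hμ, hat_bigConj]
    ext d
    constructor
    · rintro hd z ⟨y, hy, rfl⟩; exact hd y hy
    · intro hd y hy; exact hd ⟨y, hy, rfl⟩
  have hxY : x.val ∈ Y := ⟨x, List.mem_cons_self, rfl⟩
  constructor
  · -- irreducible ⟹ sup exists
    rintro ⟨⟨_, _, _, hnc⟩, hirr⟩
    have hne : (hat μ).Nonempty := by
      by_contra h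
      rw [Set.not_nonempty_iff_eq_empty] at h
      exact hnc ⟨dwf_foldl l _ (DWF.atom x),
        (dseq_singleton μ Fm.ff).mpr (by rw [h]; exact Set.Subset.rfl)⟩
    -- local sups
    have hsup : ∀ z ∈ hat μ, ∃ s, s ≤ z ∧ (∀ y ∈ Y, y ≤ s) ∧
        ∀ u, u ≤ z → (∀ y ∈ Y, y ≤ u) → s ≤ u := by
      intro z hz
      have hYz : Y ⊆ Set.Iic z := by
        rintro w ⟨y, hy, rfl⟩
        rw [hhat] at hz
        exact hz ⟨y, hy, rfl⟩
      obtain ⟨s, hs, hub, hlst⟩ := hD.2 z Y hYz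
      exact ⟨s, hs, hub, fun u hu hub' => hlst u hu hub'⟩
    choose σ hσle hσub hσlst using hsup
    have hσmem : ∀ z hz, σ z hz ∈ hat μ := by
      intro z hz
      rw [hhat]
      exact fun y hy => hσub z hz y hy
    -- σ is constant along ≤ within hat μ
    have hconst : ∀ z hz z' (hz' : z' ∈ hat μ), z' ≤ z → σ z' hz' = σ z hz := by
      intro z hz z' hz' hle
      have h1 : σ z hz ≤ σ z' hz' :=
        hσlst z hz _ (le_trans (hσle z' hz') hle) (hσub z' hz')
      have h2 : σ z' hz' ≤ σ z hz :=
        hσlst z' hz' _ (le_trans h1 (hσle z' hz')) (hσub z hz)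
      exact le_antisymm h2 h1
    have hfix : ∀ z hz, σ (σ z hz) (hσmem z hz) = σ z hz := by
      intro z hz
      exact hconst z hz _ (hσmem z hz) (hσle z hz)
    -- each σ z is compact and not bottom
    have hcompact : ∀ z hz, IsCompactElt (σ z hz) := by
      intro z hz d hdne hdir t hlub hle
      have htmem : t ∈ hat μ := hat_upper μ _ _ (hσmem z hz) hle
      have hbd : ∀ a ∈ (x :: l).map (fun y : LAtom D => y.val),
          ∃ b ∈ d, a ≤ b := by
        intro a ha
        obtain ⟨y, hy, rfl⟩ := List.mem_map.mp ha
        have hya : y.val ≤ σ z hz := hσub z hz y.val ⟨y, hy, rfl⟩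
        exact y.2.1 d hdne hdir t hlub (le_trans hya hle)
      obtain ⟨b, hb, hball⟩ := directed_list_bound d hdne hdir _ hbd
      have hbub : ∀ y ∈ Y, y ≤ b := by
        rintro w ⟨y, hy, rfl⟩
        exact hball y.val (List.mem_map.mpr ⟨y, hy, rfl⟩)
      have hσt : σ t htmem = σ z hz := by
        have e1 : σ (σ z hz) (hσmem z hz) = σ t htmem :=
          hconst t htmem _ (hσmem z hz) hle
        rw [hfix z hz] at e1
        exact e1.symm
      have : σ t htmem ≤ b := hσlst t htmem b (hlub.1 hb) hbub
      rw [hσt] at this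
      exact ⟨b, hb, this⟩
    have hnbot : ∀ z hz, ¬ IsBot (σ z hz) := by
      intro z hz hbot
      exact x.2.2 (fun b => le_trans (hσub z hz x.val hxY) (hbot b))
    -- the disjoint family of atoms
    set M : Set D := {m | ∃ z, ∃ hz : z ∈ hat μ, σ z hz = m} with hM
    have hMc : ∀ m : M, IsCompactElt m.val ∧ ¬ IsBot m.val := by
      rintro ⟨m, z, hz, rfl⟩
      exact ⟨hcompact z hz, hnbot z hz⟩
    set f : M → Fm (LAtom D) := fun m => Fm.atom ⟨m.val, hMc m⟩ with hf
    have hMmem : ∀ m : M, m.val ∈ hat μ := by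
      rintro ⟨m, z, hz, rfl⟩
      exact hσmem z hz
    have hMσ : ∀ (m : M) w (hw : w ∈ hat μ), m.val ≤ w → σ w hw = m.val := by
      rintro ⟨m, z, hz, rfl⟩ w hw hmw
      have e1 : σ (σ z hz) (hσmem z hz) = σ w hw := hconst w hw _ (hσmem z hz) hmw
      rw [hfix z hz] at e1
      exact e1.symm
    have hdisj : ∀ i j : M, i ≠ j → DSeq {f i, f j} Fm.ff := by
      intro i j hij
      rw [dseq_pair]
      rintro w ⟨hwi, hwj⟩
      have hw : w ∈ hat μ := hat_upper μ _ _ (hMmem i) hwi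
      have e1 : σ w hw = i.val := hMσ i w hw hwi
      have e2 : σ w hw = j.val := hMσ j w hw hwj
      exact absurd (Subtype.ext (e1 ▸ e2)) hij
    have hseq : DSeq {μ} (Fm.disj f) := by
      rw [dseq_singleton]
      intro z hz
      exact ⟨_, ⟨⟨σ z hz, z, hz, rfl⟩, rfl⟩, hσle z hz⟩
    obtain ⟨i₀, hi₀⟩ := hirr M f (fun i => DWF.atom _) hdisj hseq
    rw [dseq_singleton] at hi₀
    refine ⟨i₀.val, ?_, ?_⟩
    · have := hMmem i₀
      rw [hhat] at this
      exact this
    · intro u hu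
      have hu' : u ∈ hat μ := by rw [hhat]; exact hu
      exact hi₀ hu'
  · -- sup exists ⟹ irreducible
    rintro ⟨s, hs⟩
    have hIci : hat μ = Set.Ici s := by
      rw [hhat]
      ext d
      constructor
      · intro hd; exact hs.2 hd
      · intro hd; exact upperBounds_mono_mem hd hs.1
    have hsat : Satisfiable DWF DSeq μ := by
      refine ⟨dwf_foldl l _ (DWF.atom x), ?_, ?_⟩
      · rintro ⟨_, htaut⟩
        rw [dseq_singleton] at htaut
        obtain ⟨b, hb⟩ := not_forall.mp x.2.2
        apply hb
        have : b ∈ hat μ := htaut trivial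
        rw [hIci] at this
        exact le_trans (hs.1 hxY) this
      · rintro ⟨_, hcon⟩
        rw [dseq_singleton] at hcon
        have : s ∈ hat μ := by rw [hIci]; exact le_refl s
        exact (hcon this).elim
    refine ⟨⟨conjShape_foldl l _ (ConjShape.atom x), hsat⟩, ?_⟩
    intro ι f hwf hd hseq
    rw [dseq_singleton] at hseq
    have hsmem : s ∈ hat μ := by rw [hIci]; exact le_refl s
    obtain ⟨_, ⟨i₀, rfl⟩, hsi⟩ := hseq hsmem
    refine ⟨i₀, ?_⟩
    rw [dseq_singleton, hIci]
    intro w hw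
    exact hat_upper (f i₀) s w hsi hw
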